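/- For every positive integer k, ∑_{i=1}^∞ (1/(2k+2i+1)) · C(2i,i)/4^i = (π/2)·C(2k,k)/4^k − 1/(2k+1). -/

import Mathlib

open scoped BigOperators
open Real

noncomputable def cb (k : ℕ) : ℝ := (Nat.choose (2*k) k : ℝ) / 4^k

noncomputable def H (k : ℕ) : ℝ := ∑ j ∈ Finset.range k, (1:ℝ)/(j+1)

noncomputable def oh (k : ℕ) : ℝ := ∑ j ∈ Finset.range k, (1:ℝ)/(2*j+1)

lemma cb_zero : cb 0 = 1 := by simp [cb]

lemma cb_pos (n : ℕ) : 0 < cb n := by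
  apply div_pos
  · exact_mod_cast Nat.choose_pos (by omega)
  · positivity

lemma cb_nonneg (n : ℕ) : 0 ≤ cb n := (cb_pos n).le

lemma cb_succ (n : ℕ) : cb (n+1) = cb n * ((2*(n:ℝ)+1)/(2*(n:ℝ)+2)) := by
  have h := Nat.succ_mul_centralBinom_succ n
  simp only [Nat.centralBinom] at h
  have h' : ((n:ℝ)+1) * ((2*(n+1)).choose (n+1) : ℝ)
      = 2 * (2*(n:ℝ)+1) * ((2*n).choose n : ℝ) := by
    exact_mod_cast congrArg (Nat.cast (R := ℝ)) h
  have h4 : (4:ℝ)^(n+1) = 4^n * 4 := pow_succ _ _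
  have hn1 : ((n:ℝ)+1) ≠ 0 := by positivity
  simp only [cb]
  rw [h4]
  field_simp
  nlinarith [h', pow_pos (show (0:ℝ) < 4 by norm_num) n]

lemma cb_le_one (n : ℕ) : cb n ≤ 1 := by
  induction n with
  | zero => simp [cb_zero]
  | succ m ih =>
    rw [cb_succ]
    have h1 : (2*(m:ℝ)+1)/(2*(m:ℝ)+2) ≤ 1 := by
      rw [div_le_one (by positivity)]; linarith
    calc cb m * ((2*(m:ℝ)+1)/(2*(m:ℝ)+2)) ≤ cb m * 1 :=
          mul_le_mul_of_nonneg_left h1 (cb_nonneg m)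
      _ ≤ 1 := by simpa using ih

lemma cb_sq_le (n : ℕ) : cb n ^ 2 * (2*(n:ℝ)+1) ≤ 1 := by
  induction n with
  | zero => simp [cb_zero]
  | succ m ih =>
    rw [cb_succ]
    have h2 : (0:ℝ) < 2*(m:ℝ)+2 := by positivity
    have hcb := cb_nonneg m
    push_cast
    have key : (cb m * ((2*(m:ℝ)+1)/(2*(m:ℝ)+2)))^2 * (2*((m:ℝ)+1)+1)
        = (cb m^2 * (2*(m:ℝ)+1)) * ((2*(m:ℝ)+1)*(2*(m:ℝ)+3)/(2*(m:ℝ)+2)^2) := by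
      field_simp; ring
    rw [key]
    have hfrac : (2*(m:ℝ)+1)*(2*(m:ℝ)+3)/(2*(m:ℝ)+2)^2 ≤ 1 := by
      rw [div_le_one (by positivity)]; nlinarith
    have h0 : 0 ≤ cb m^2 * (2*(m:ℝ)+1) := by positivity
    calc (cb m^2 * (2*(m:ℝ)+1)) * ((2*(m:ℝ)+1)*(2*(m:ℝ)+3)/(2*(m:ℝ)+2)^2)
        ≤ (cb m^2 * (2*(m:ℝ)+1)) * 1 := mul_le_mul_of_nonneg_left hfrac h0
      _ ≤ 1 := by simpa using ih

/-! ### The binomial series `∑ cb i * t^i = 1/√(1-t)` -/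

noncomputable def Acb (x : ℝ) : ℝ := ∑' i : ℕ, ((i:ℝ)+1) * cb (i+1) * x ^ i

lemma summable_geom_aux {r : ℝ} (h0 : 0 ≤ r) (h1 : r < 1) :
    Summable (fun i : ℕ => ((i:ℝ)+1) * r ^ i) := by
  have hr : ‖r‖ < 1 := by rwa [Real.norm_eq_abs, abs_of_nonneg h0]
  have h1' : Summable (fun i : ℕ => (i:ℝ) * r ^ i) := by
    simpa using summable_pow_mul_geometric_of_norm_lt_one 1 hr
  have h2 : Summable (fun i : ℕ => r ^ i) := summable_geometric_of_norm_lt_one hr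
  have := h1'.add h2
  convert this using 2 with i
  ring

lemma summable_A {x : ℝ} (hx : |x| < 1) :
    Summable (fun i : ℕ => ((i:ℝ)+1) * cb (i+1) * x ^ i) := by
  apply Summable.of_norm_bounded (summable_geom_aux (abs_nonneg x) hx)
  intro i
  rw [Real.norm_eq_abs, abs_mul, abs_mul, abs_pow]
  have h1 : |((i:ℝ)+1)| = (i:ℝ)+1 := abs_of_nonneg (by positivity)
  have h2 : |cb (i+1)| = cb (i+1) := abs_of_nonneg (cb_nonneg _)
  rw [h1, h2]
  have hxp : (0:ℝ) ≤ |x| ^ i := by positivity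
  calc ((i:ℝ)+1) * cb (i+1) * |x| ^ i ≤ ((i:ℝ)+1) * 1 * |x| ^ i := by
        refine mul_le_mul_of_nonneg_right ?_ hxp
        exact mul_le_mul_of_nonneg_left (cb_le_one _) (by positivity)
    _ = ((i:ℝ)+1) * |x| ^ i := by ring

lemma hasSum_A {x : ℝ} (hx : |x| < 1) :
    HasSum (fun i : ℕ => ((i:ℝ)+1) * cb (i+1) * x ^ i) (Acb x) :=
  (summable_A hx).hasSum

lemma hasSum_F {x : ℝ} (hx : |x| < 1) :
    HasSum (fun i : ℕ => cb i * x ^ i) (2*(1-x)*(Acb x)) := by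
  have hA := hasSum_A hx
  have hB : HasSum (fun i : ℕ => (i:ℝ) * cb i * x ^ i) (x * Acb x) := by
    refine (hasSum_nat_add_iff' (f := fun i : ℕ => (i:ℝ) * cb i * x ^ i) 1).mp ?_
    have h0 := hA.mul_left x
    simp only [Finset.range_one, Finset.sum_singleton, Nat.cast_zero, zero_mul, sub_zero]
    convert h0 using 2 with i
    rfl
    push_cast
    ring
  have hsub := (hA.sub hB).mul_left 2
  have heq : ∀ i : ℕ, 2 * (((i:ℝ)+1) * cb (i+1) * x ^ i - (i:ℝ) * cb i * x ^ i)
      = cb i * x ^ i := by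
    intro i
    rw [cb_succ]
    have h2 : (2*(i:ℝ)+2) ≠ 0 := by positivity
    field_simp
    ring
  have hfinal : HasSum (fun i : ℕ => cb i * x ^ i) (2 * (Acb x - x * Acb x)) := by
    simpa only [heq] using hsub
  have hv : 2 * (Acb x - x * Acb x) = 2*(1-x)*(Acb x) := by ring
  rwa [hv] at hfinal

noncomputable def Fcb (x : ℝ) : ℝ := ∑' i : ℕ, cb i * x ^ i

lemma Fcb_eq {x : ℝ} (hx : |x| < 1) : Fcb x = 2*(1-x)*(Acb x) := (hasSum_F hx).tsum_eq

lemma hasDerivAt_F {x : ℝ} (hx : |x| < 1) : HasDerivAt Fcb (Acb x) x := by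
  set r : ℝ := (|x| + 1)/2 with hr
  have hr0 : 0 < r := by have := abs_nonneg x; rw [hr]; linarith
  have hr1 : r < 1 := by rw [hr]; linarith
  have hxr : |x| < r := by rw [hr]; linarith
  have hu : Summable (fun i : ℕ => (i:ℝ) * r ^ (i-1)) := by
    refine (summable_nat_add_iff 1).mp ?_
    refine (summable_geom_aux hr0.le hr1).congr fun i => ?_
    push_cast [Nat.add_sub_cancel]
    ring
  have key := hasDerivAt_tsum_of_isPreconnected (u := fun i : ℕ => (i:ℝ) * r ^ (i-1))
    (g := fun (i : ℕ) (y : ℝ) => cb i * y ^ i)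
    (g' := fun (i : ℕ) (y : ℝ) => cb i * ((i:ℝ) * y ^ (i-1)))
    hu (isOpen_Ioo (a := -r) (b := r)) (convex_Ioo _ _).isPreconnected
    (fun n y _ => (hasDerivAt_pow n y).const_mul _)
    (fun n y hy => ?_) (Set.mem_Ioo.mpr ⟨by linarith, hr0⟩) ?_
    (Set.mem_Ioo.mpr (abs_lt.mp hxr))
  · have hshift : HasSum (fun n : ℕ => cb n * ((n:ℝ) * x ^ (n-1))) (Acb x) := by
      refine (hasSum_nat_add_iff' (f := fun n : ℕ => cb n * ((n:ℝ) * x ^ (n-1))) 1).mp ?_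
      simp only [Finset.range_one, Finset.sum_singleton, Nat.cast_zero, zero_mul,
        mul_zero, sub_zero]
      have := hasSum_A hx
      convert this using 2 with i
      rfl
      push_cast [Nat.add_sub_cancel]
      ring
    have : (∑' n : ℕ, cb n * ((n:ℝ) * x ^ (n-1))) = Acb x := hshift.tsum_eq
    rw [this] at key
    exact key
  · have hyr : |y| ≤ r := by
      rcases Set.mem_Ioo.mp hy with ⟨h1, h2⟩
      rw [abs_le]; constructor <;> linarith
    rw [Real.norm_eq_abs, abs_mul, abs_mul, abs_pow]
    have h1 : |cb n| = cb n := abs_of_nonneg (cb_nonneg _)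
    have h2 : |(n:ℝ)| = (n:ℝ) := abs_of_nonneg (Nat.cast_nonneg _)
    rw [h1, h2]
    have hpow : |y| ^ (n-1) ≤ r ^ (n-1) := pow_le_pow_left₀ (abs_nonneg y) hyr _
    calc cb n * ((n:ℝ) * |y| ^ (n-1)) ≤ 1 * ((n:ℝ) * r ^ (n-1)) := by
          refine mul_le_mul (cb_le_one n) ?_ (by positivity) (by norm_num)
          exact mul_le_mul_of_nonneg_left hpow (Nat.cast_nonneg n)
      _ = (n:ℝ) * r ^ (n-1) := one_mul _
  · refine summable_of_ne_finset_zero (s := {0}) ?_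
    intro n hn
    simp only [Finset.mem_singleton] at hn
    simp [zero_pow hn]

lemma Fcb_zero : Fcb 0 = 1 := by
  rw [Fcb, tsum_eq_single 0 ?_]
  · simp [cb_zero]
  · intro n hn
    simp [zero_pow hn]

lemma Fcb_sq (t : ℝ) (h0 : 0 ≤ t) (h1 : t < 1) : Fcb t ^ 2 * (1 - t) = 1 := by
  have habs : ∀ x ∈ Set.Icc (0:ℝ) t, |x| < 1 := by
    intro x hx
    rcases hx with ⟨hx0, hx1⟩
    rw [abs_of_nonneg hx0]; linarith
  have hderiv : ∀ x ∈ Set.Icc (0:ℝ) t, HasDerivAt (fun y => Fcb y ^ 2 * (1 - y)) 0 x := by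
    intro x hx
    have hxa := habs x hx
    have hF := hasDerivAt_F hxa
    have hg : HasDerivAt (fun y : ℝ => 1 - y) (-1) x := by
      simpa using (hasDerivAt_id x).const_sub 1
    have hmul := ((hF.pow 2).mul hg)
    convert hmul using 1
    rfl
    rfl
    rfl
    rw [Pi.pow_apply, Fcb_eq hxa]
    push_cast
    norm_num
    ring
  have hcont : ContinuousOn (fun y => Fcb y ^ 2 * (1 - y)) (Set.Icc 0 t) :=
    fun x hx => ((hderiv x hx).continuousAt).continuousWithinAt
  have := constant_of_has_deriv_right_zero hcont
    (fun x hx => ((hderiv x (Set.mem_Icc_of_Ico hx)).hasDerivWithinAt))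
    t (Set.right_mem_Icc.mpr h0)
  rw [this]
  simp [Fcb_zero]

lemma hasSum_cb {t : ℝ} (h0 : 0 ≤ t) (h1 : t < 1) :
    HasSum (fun i : ℕ => cb i * t ^ i) (1 / Real.sqrt (1 - t)) := by
  have hx : |t| < 1 := by rw [abs_of_nonneg h0]; exact h1
  have hF := hasSum_F hx
  have h1t : (0:ℝ) < 1 - t := by linarith
  have hFone : (1:ℝ) ≤ 2*(1-t)*(Acb t) := by
    have := le_hasSum hF 0 (fun i _ => mul_nonneg (cb_nonneg i) (pow_nonneg h0 i))
    simpa [cb_zero] using this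
  have hFt : Fcb t = 2*(1-t)*(Acb t) := Fcb_eq hx
  have hsq : Fcb t ^ 2 = 1/(1-t) := by
    have := Fcb_sq t h0 h1
    field_simp
    linarith [this]
  have hval : 2*(1-t)*(Acb t) = 1 / Real.sqrt (1-t) := by
    rw [← hFt]
    have hFnn : (0:ℝ) ≤ Fcb t := by rw [hFt]; linarith
    have : Fcb t = Real.sqrt (1/(1-t)) := by
      rw [← hsq, Real.sqrt_sq hFnn]
    rw [this, one_div, one_div, Real.sqrt_inv]
  rwa [hval] at hF

/-! ### Integrals -/

lemma int_pow_cos (m : ℕ) :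
    ∫ θ in Set.Ioo (0:ℝ) (π/2), Real.sin θ ^ m * Real.cos θ = 1/((m:ℝ)+1) := by
  rw [← MeasureTheory.integral_Ioc_eq_integral_Ioo,
    ← intervalIntegral.integral_of_le (by positivity : (0:ℝ) ≤ π/2)]
  have h := integral_sin_pow_mul_cos_pow_odd (a := 0) (b := π/2) m 0
  simp only [mul_zero, zero_add, pow_one, pow_zero, mul_one, Real.sin_zero,
    Real.sin_pi_div_two] at h
  rw [h, integral_pow]
  simp

lemma wallis (m : ℕ) :
    ∫ θ in (0:ℝ)..(π/2), Real.sin θ ^ (2*m) = (π/2) * cb m := by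
  induction m with
  | zero => simp [cb_zero]
  | succ n ih =>
    have h := integral_sin_pow (a := 0) (b := π/2) (n := 2*n)
    have h2 : 2*(n+1) = 2*n+2 := by ring
    rw [h2, h, ih, Real.sin_zero, Real.cos_pi_div_two, cb_succ]
    simp only [zero_pow, mul_zero, zero_mul, Nat.add_eq_zero]
    push_cast
    have hne : (2*(n:ℝ)+2) ≠ 0 := ne_of_gt (by positivity)
    field_simp
    ring

lemma master_summable (k : ℕ) :
    Summable (fun i : ℕ => cb i / (2*(k:ℝ) + 2*(i:ℝ) + 1)) := by
  have h32 : Summable (fun i : ℕ => 1/(((i:ℝ)+1) * Real.sqrt ((i:ℝ)+1))) := by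
    have hbase := Real.summable_one_div_nat_rpow.mpr (by norm_num : (1:ℝ) < 3/2)
    have := (summable_nat_add_iff 1).mpr hbase
    refine this.congr fun i => ?_
    have hpos : (0:ℝ) < (i:ℝ)+1 := by positivity
    push_cast
    rw [show (3/2:ℝ) = 1 + 1/2 by norm_num, Real.rpow_add hpos, Real.rpow_one,
      ← Real.sqrt_eq_rpow]
  refine Summable.of_nonneg_of_le (fun i => div_nonneg (cb_nonneg i) (by positivity)) (fun i => ?_) h32
  have hpos1 : (0:ℝ) < (i:ℝ)+1 := by positivity
  have hs1 : (0:ℝ) < Real.sqrt ((i:ℝ)+1) := Real.sqrt_pos.mpr hpos1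
  have hcb : cb i ≤ 1 / Real.sqrt ((i:ℝ)+1) := by
    have hsq := cb_sq_le i
    have h21 : (0:ℝ) < 2*(i:ℝ)+1 := by positivity
    have hcb2 : cb i ^ 2 ≤ 1/(2*(i:ℝ)+1) := by
      rw [le_div_iff₀ h21]; linarith
    have : cb i = Real.sqrt (cb i ^ 2) := (Real.sqrt_sq (cb_nonneg i)).symm
    rw [this]
    calc Real.sqrt (cb i ^ 2) ≤ Real.sqrt (1/((i:ℝ)+1)) := by
          apply Real.sqrt_le_sqrt
          refine hcb2.trans ?_
          apply div_le_div_of_nonneg_left (by norm_num) hpos1 (by linarith)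
      _ = 1 / Real.sqrt ((i:ℝ)+1) := by
          rw [one_div, one_div, Real.sqrt_inv]
  have hden : ((i:ℝ)+1) ≤ 2*(k:ℝ) + 2*(i:ℝ) + 1 := by
    have : (0:ℝ) ≤ (k:ℝ) := Nat.cast_nonneg k
    linarith
  have hdpos : (0:ℝ) < 2*(k:ℝ) + 2*(i:ℝ) + 1 := by positivity
  calc cb i / (2*(k:ℝ) + 2*(i:ℝ) + 1) ≤ (1 / Real.sqrt ((i:ℝ)+1)) / ((i:ℝ)+1) := by
        exact div_le_div₀ (by positivity) hcb hpos1 hden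
    _ = 1/(((i:ℝ)+1) * Real.sqrt ((i:ℝ)+1)) := by
        rw [div_div, one_div, one_div, mul_comm]

lemma master (k : ℕ) :
    HasSum (fun i : ℕ => cb i / (2*(k:ℝ) + 2*(i:ℝ) + 1)) ((π/2) * cb k) := by
  set μ := MeasureTheory.volume.restrict (Set.Ioo (0:ℝ) (π/2)) with hμ
  set Fi : ℕ → ℝ → ℝ := fun i θ => cb i * (Real.sin θ ^ (2*(k+i)) * Real.cos θ) with hFi
  have hcont : ∀ i, Continuous (Fi i) := fun i => by
    rw [hFi]; fun_prop
  have hint : ∀ i, MeasureTheory.Integrable (Fi i) μ := fun i =>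
    ((hcont i).integrableOn_Icc (a := 0) (b := π/2)).mono_set Set.Ioo_subset_Icc_self
  have hval : ∀ i, (∫ θ, Fi i θ ∂μ) = cb i / (2*(k:ℝ) + 2*(i:ℝ) + 1) := by
    intro i
    rw [hμ, hFi]
    simp only []
    rw [MeasureTheory.integral_const_mul, int_pow_cos (2*(k+i)), mul_one_div]
    congr 1
    push_cast
    ring
  have hnonneg : ∀ i, ∀ θ ∈ Set.Ioo (0:ℝ) (π/2), 0 ≤ Fi i θ := by
    intro i θ hθ
    rcases hθ with ⟨h1, h2⟩
    have hpi := Real.pi_pos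
    have hs : 0 ≤ Real.sin θ := Real.sin_nonneg_of_nonneg_of_le_pi h1.le (by linarith)
    have hc : 0 ≤ Real.cos θ := Real.cos_nonneg_of_mem_Icc ⟨by linarith, h2.le⟩
    exact mul_nonneg (cb_nonneg i) (mul_nonneg (pow_nonneg hs _) hc)
  have hnorm : ∀ i, (∫ θ, ‖Fi i θ‖ ∂μ) = cb i / (2*(k:ℝ) + 2*(i:ℝ) + 1) := by
    intro i
    rw [← hval i, hμ]
    refine MeasureTheory.setIntegral_congr_fun measurableSet_Ioo fun θ hθ => ?_
    exact Real.norm_of_nonneg (hnonneg i θ hθ)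
  have hsum : Summable (fun i => ∫ θ, ‖Fi i θ‖ ∂μ) :=
    (master_summable k).congr fun i => (hnorm i).symm
  have H := MeasureTheory.hasSum_integral_of_summable_integral_norm hint hsum
  have hpt : ∀ θ ∈ Set.Ioo (0:ℝ) (π/2), (∑' i, Fi i θ) = Real.sin θ ^ (2*k) := by
    intro θ hθ
    rcases hθ with ⟨h1, h2⟩
    have hpi := Real.pi_pos
    have hcpos : 0 < Real.cos θ := Real.cos_pos_of_mem_Ioo ⟨by linarith, h2⟩
    have hcs : Real.cos θ ^ 2 = 1 - Real.sin θ ^ 2 := Real.cos_sq' θ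
    have ht1 : Real.sin θ ^ 2 < 1 := by nlinarith
    have ht0 : 0 ≤ Real.sin θ ^ 2 := sq_nonneg _
    have hsum2 := (hasSum_cb ht0 ht1).mul_right (Real.sin θ ^ (2*k) * Real.cos θ)
    have hsqrt : Real.sqrt (1 - Real.sin θ ^ 2) = Real.cos θ := by
      rw [← hcs, Real.sqrt_sq hcpos.le]
    rw [hsqrt] at hsum2
    have hv : (1 / Real.cos θ) * (Real.sin θ ^ (2*k) * Real.cos θ)
        = Real.sin θ ^ (2*k) := by field_simp
    rw [hv] at hsum2
    refine HasSum.tsum_eq ?_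
    convert hsum2 using 2 with i
    rfl
    rw [hFi]
    simp only []
    rw [show 2*(k+i) = 2*k + 2*i by ring, pow_add, pow_mul]
    ring
  have hfin : (∫ θ, (∑' i, Fi i θ) ∂μ) = (π/2) * cb k := by
    rw [hμ, MeasureTheory.setIntegral_congr_fun measurableSet_Ioo hpt,
      ← MeasureTheory.integral_Ioc_eq_integral_Ioo,
      ← intervalIntegral.integral_of_le (by positivity : (0:ℝ) ≤ π/2)]
    exact wallis k
  rw [hfin] at H
  have heqf : (fun i : ℕ => ∫ θ, Fi i θ ∂μ)
      = fun i => cb i / (2*(k:ℝ) + 2*(i:ℝ) + 1) := funext hval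
  rw [heqf] at H
  exact H

theorem stmt_13 (k : ℕ) (hk : 0 < k) :
    ∑' i : ℕ, (1/(2*(k:ℝ) + 2*((i:ℝ)+1) + 1)) * cb (i+1)
      = (Real.pi/2) * cb k - 1/(2*(k:ℝ)+1) := by
  have hm := master k
  have h1 := (hasSum_nat_add_iff'
    (f := fun i : ℕ => cb i / (2*(k:ℝ) + 2*(i:ℝ) + 1)) 1).mpr hm
  simp only [Finset.range_one, Finset.sum_singleton, Nat.cast_zero, mul_zero,
    add_zero] at h1
  have h2 : HasSum (fun i : ℕ => (1/(2*(k:ℝ) + 2*((i:ℝ)+1) + 1)) * cb (i+1))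
      ((Real.pi/2) * cb k - 1/(2*(k:ℝ)+1)) := by
    convert h1 using 2 with i
    · rfl
    · push_cast
      ring
    · rw [cb_zero]
  exact h2.tsum_eq
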